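/- Let G be a group, N a normal subgroup of G, and γ ∈ G such that G is generated by N ∪ {γ}. Let ρ : G → SL₂(ℂ) be a group homomorphism with tr(ρ(γ)) = 2 or tr(ρ(γ)) = −2. If ρ is irreducible, then the restriction of ρ to N is irreducible. -/

import Mathlib

open Matrix Submodule Module

/-- A homomorphism `ρ : G → SL₂(ℂ)` is irreducible if no one-dimensional ℂ-subspace
`L ⊆ ℂ²` satisfies `ρ(g)L = L` for all `g ∈ G`. -/
def IsIrreducibleRep {G : Type*} [Group G]
    (ρ : G →* Matrix.SpecialLinearGroup (Fin 2) ℂ) : Prop :=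
  ¬ ∃ L : Submodule ℂ (Fin 2 → ℂ), Module.finrank ℂ L = 1 ∧
      ∀ g : G, Submodule.map (Matrix.toLin' ((ρ g : Matrix (Fin 2) (Fin 2) ℂ))) L = L

private lemma sq_fin_two (M : Matrix (Fin 2) (Fin 2) ℂ) :
    M * M = M.trace • M - M.det • (1 : Matrix (Fin 2) (Fin 2) ℂ) := by
  rw [Matrix.trace_fin_two, Matrix.det_fin_two]
  ext i j
  fin_cases i <;> fin_cases j <;>
    simp [Matrix.mul_apply, Fin.sum_univ_two, Matrix.one_apply] <;> ring

theorem irreducible_restriction_of_normal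
    {G : Type*} [Group G] (N : Subgroup G) [N.Normal] (γ : G)
    (hgen : Subgroup.closure ((N : Set G) ∪ {γ}) = ⊤)
    (ρ : G →* Matrix.SpecialLinearGroup (Fin 2) ℂ)
    (htr : Matrix.trace (ρ γ : Matrix (Fin 2) (Fin 2) ℂ) = 2 ∨
           Matrix.trace (ρ γ : Matrix (Fin 2) (Fin 2) ℂ) = -2)
    (hirr : IsIrreducibleRep ρ) :
    ¬ ∃ L : Submodule ℂ (Fin 2 → ℂ), Module.finrank ℂ L = 1 ∧
        ∀ n ∈ N, Submodule.map (Matrix.toLin' ((ρ n : Matrix (Fin 2) (Fin 2) ℂ))) L = L := by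
  rintro ⟨L, hL1, hLN⟩
  -- notation
  set A : (Fin 2 → ℂ) →ₗ[ℂ] (Fin 2 → ℂ) :=
    Matrix.toLin' ((ρ γ : Matrix (Fin 2) (Fin 2) ℂ)) with hAdef
  -- injectivity of each ρ g
  have hinj : ∀ g : G,
      Function.Injective (Matrix.toLin' ((ρ g : Matrix (Fin 2) (Fin 2) ℂ))) := by
    intro g
    have hli : Function.LeftInverse
        (Matrix.toLin' ((ρ g⁻¹ : Matrix (Fin 2) (Fin 2) ℂ)))
        (Matrix.toLin' ((ρ g : Matrix (Fin 2) (Fin 2) ℂ))) := by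
      intro x
      rw [← LinearMap.comp_apply, ← Matrix.toLin'_mul,
        ← Matrix.SpecialLinearGroup.coe_mul, ← _root_.map_mul, inv_mul_cancel, _root_.map_one,
        Matrix.SpecialLinearGroup.coe_one, Matrix.toLin'_one, LinearMap.id_apply]
    exact hli.injective
  -- key reduction: an N-invariant and γ-invariant line contradicts irreducibility
  have key : ∀ L' : Submodule ℂ (Fin 2 → ℂ), Module.finrank ℂ L' = 1 →
      (∀ n ∈ N, Submodule.map (Matrix.toLin' ((ρ n : Matrix (Fin 2) (Fin 2) ℂ))) L' = L') →
      Submodule.map A L' = L' → False := by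
    intro L' h1 hN hγ
    apply hirr
    refine ⟨L', h1, fun g => ?_⟩
    let S : Subgroup G :=
      { carrier := {g | Submodule.map (Matrix.toLin' ((ρ g : Matrix (Fin 2) (Fin 2) ℂ))) L' = L'}
        one_mem' := by
          simp only [Set.mem_setOf_eq, _root_.map_one, Matrix.SpecialLinearGroup.coe_one,
            Matrix.toLin'_one, Submodule.map_id]
        mul_mem' := by
          intro a b ha hb
          simp only [Set.mem_setOf_eq] at *
          rw [_root_.map_mul, Matrix.SpecialLinearGroup.coe_mul, Matrix.toLin'_mul,
            Submodule.map_comp, hb, ha]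
        inv_mem' := by
          intro a ha
          simp only [Set.mem_setOf_eq] at *
          conv_lhs => rw [← ha]
          rw [← Submodule.map_comp, ← Matrix.toLin'_mul, ← Matrix.SpecialLinearGroup.coe_mul,
            ← _root_.map_mul, inv_mul_cancel, _root_.map_one, Matrix.SpecialLinearGroup.coe_one,
            Matrix.toLin'_one, Submodule.map_id] }
    have hle : Subgroup.closure ((N : Set G) ∪ {γ}) ≤ S := by
      rw [Subgroup.closure_le]
      rintro x (hx | rfl)
      · exact hN x hx
      · exact hγ
    exact hle (hgen ▸ Subgroup.mem_top g)
  by_cases hAL : Submodule.map A L = L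
  · exact key L hL1 hLN hAL
  -- find a generator v of L
  have hLbot : L ≠ ⊥ := by
    intro h
    rw [h, finrank_bot] at hL1
    exact zero_ne_one hL1
  obtain ⟨v, hvL, hv0⟩ := Submodule.exists_mem_ne_zero_of_ne_bot hLbot
  have hLspan : L = (ℂ ∙ v) := by
    refine (Submodule.eq_of_le_of_finrank_le ((Submodule.span_singleton_le_iff_mem v L).mpr hvL) ?_).symm
    rw [hL1, finrank_span_singleton hv0]
  set w : Fin 2 → ℂ := A v with hwdef
  have hw0 : w ≠ 0 := by
    intro h
    exact hv0 (hinj γ (show A v = A 0 by rw [← hwdef, h, map_zero]))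
  have hALspan : Submodule.map A L = (ℂ ∙ w) := by
    rw [hLspan, Submodule.map_span, Set.image_singleton]
  -- linear independence of v, w
  have hind : ∀ s t : ℂ, s • v + t • w = 0 → s = 0 ∧ t = 0 := by
    intro s t hst
    have ht : t = 0 := by
      by_contra ht
      have htw : t • w = (-s) • v := by
        linear_combination (norm := module) hst
      have hwv : w = t⁻¹ • ((-s) • v) := by
        rw [← htw, inv_smul_smul₀ ht]
      have hle : Submodule.map A L ≤ L := by
        rw [hALspan, hLspan]
        refine (Submodule.span_singleton_le_iff_mem _ _).mpr ?_
        rw [hwv]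
        exact Submodule.smul_mem _ _
          (Submodule.smul_mem _ _ (Submodule.mem_span_singleton_self v))
      have : Submodule.map A L = L := by
        refine Submodule.eq_of_le_of_finrank_le hle ?_
        rw [hL1, hALspan, finrank_span_singleton hw0]
      exact hAL this
    refine ⟨?_, ht⟩
    rw [ht, zero_smul, add_zero, smul_eq_zero] at hst
    exact hst.resolve_right hv0
  have hli : LinearIndependent ℂ ![v, w] := by
    rw [LinearIndependent.pair_iff]
    exact hind
  have hspan_top : Submodule.span ℂ ({v, w} : Set (Fin 2 → ℂ)) = ⊤ := by
    have := hli.span_eq_top_of_card_eq_finrank (by simp)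
    rw [show ({v, w} : Set (Fin 2 → ℂ)) = {w, v} from Set.pair_comm v w]
    simpa [Matrix.range_cons, Matrix.range_empty] using this
  -- trace value
  set t : ℂ := Matrix.trace (ρ γ : Matrix (Fin 2) (Fin 2) ℂ) with htdef
  have ht0 : t ≠ 0 := by
    rcases htr with h | h <;> rw [h] <;> norm_num
  -- Cayley-Hamilton: A w = t • w - v
  have hAw : A w = t • w - v := by
    have hdet : (ρ γ : Matrix (Fin 2) (Fin 2) ℂ).det = 1 := (ρ γ).2
    have := sq_fin_two ((ρ γ : Matrix (Fin 2) (Fin 2) ℂ))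
    rw [hdet, one_smul, ← htdef] at this
    have h2 : A (A v) = Matrix.toLin'
        ((ρ γ : Matrix (Fin 2) (Fin 2) ℂ) * (ρ γ : Matrix (Fin 2) (Fin 2) ℂ)) v := by
      rw [Matrix.toLin'_mul, LinearMap.comp_apply]
    rw [hwdef, h2, this, _root_.map_sub, _root_.map_smul, Matrix.toLin'_one]
    simp [Matrix.smul_mulVec, Matrix.toLin'_apply, hAdef]
  set w2 : Fin 2 → ℂ := t • w - v with hw2def
  have hw20 : w2 ≠ 0 := by
    intro h
    have : (-1 : ℂ) • v + t • w = 0 := by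
      rw [hw2def] at h
      linear_combination (norm := module) h
    have := (hind _ _ this).1
    norm_num at this
  -- invariance of span w and span w2 under N
  have hconj : ∀ n ∈ N, ∀ L' : Submodule ℂ (Fin 2 → ℂ),
      (∀ m ∈ N, Submodule.map (Matrix.toLin' ((ρ m : Matrix (Fin 2) (Fin 2) ℂ))) L' = L') →
      Submodule.map (Matrix.toLin' ((ρ n : Matrix (Fin 2) (Fin 2) ℂ))) (Submodule.map A L')
        = Submodule.map A L' := by
    intro n hn L' hinv
    have hm : γ⁻¹ * n * γ ∈ N := by
      have := Subgroup.Normal.conj_mem ‹N.Normal› n hn γ⁻¹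
      simpa using this
    have hcomm : (ρ n : Matrix (Fin 2) (Fin 2) ℂ) * (ρ γ : Matrix (Fin 2) (Fin 2) ℂ)
        = (ρ γ : Matrix (Fin 2) (Fin 2) ℂ) * (ρ (γ⁻¹ * n * γ) : Matrix (Fin 2) (Fin 2) ℂ) := by
      rw [← Matrix.SpecialLinearGroup.coe_mul, ← Matrix.SpecialLinearGroup.coe_mul,
        ← _root_.map_mul, ← _root_.map_mul]
      congr 1
      simp [mul_assoc]
      rfl
    rw [← Submodule.map_comp, ← Matrix.toLin'_mul, hcomm, Matrix.toLin'_mul,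
      Submodule.map_comp, hinv _ hm]
  have hNW : ∀ n ∈ N, Submodule.map (Matrix.toLin' ((ρ n : Matrix (Fin 2) (Fin 2) ℂ))) (ℂ ∙ w) = (ℂ ∙ w) := by
    intro n hn
    rw [← hALspan]
    exact hconj n hn L hLN
  have hAALspan : Submodule.map A (Submodule.map A L) = (ℂ ∙ w2) := by
    rw [hALspan, Submodule.map_span, Set.image_singleton, hAw]
  have hNW2 : ∀ n ∈ N, Submodule.map (Matrix.toLin' ((ρ n : Matrix (Fin 2) (Fin 2) ℂ))) (ℂ ∙ w2) = (ℂ ∙ w2) := by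
    intro n hn
    rw [← hAALspan]
    refine hconj n hn (Submodule.map A L) ?_
    intro m hm
    exact hconj m hm L hLN
  -- each ρ n acts as a scalar
  have hscalar : ∀ n ∈ N, ∃ a : ℂ, a ≠ 0 ∧
      (∀ x : Fin 2 → ℂ, Matrix.toLin' ((ρ n : Matrix (Fin 2) (Fin 2) ℂ)) x = a • x) := by
    intro n hn
    set f := Matrix.toLin' ((ρ n : Matrix (Fin 2) (Fin 2) ℂ)) with hfdef
    have hfv : f v ∈ (ℂ ∙ v) := by
      have : f v ∈ Submodule.map f L := Submodule.mem_map_of_mem hvL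
      rw [hLN n hn, hLspan] at this
      exact this
    obtain ⟨a, ha⟩ := Submodule.mem_span_singleton.mp hfv
    have hfw : f w ∈ (ℂ ∙ w) := by
      have : f w ∈ Submodule.map f (ℂ ∙ w) :=
        Submodule.mem_map_of_mem (Submodule.mem_span_singleton_self w)
      rw [hNW n hn] at this
      exact this
    obtain ⟨b, hb⟩ := Submodule.mem_span_singleton.mp hfw
    have hfw2 : f w2 ∈ (ℂ ∙ w2) := by
      have : f w2 ∈ Submodule.map f (ℂ ∙ w2) :=
        Submodule.mem_map_of_mem (Submodule.mem_span_singleton_self w2)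
      rw [hNW2 n hn] at this
      exact this
    obtain ⟨c, hc⟩ := Submodule.mem_span_singleton.mp hfw2
    -- compute: f w2 = t • (b • w) - a • v  and  = c • (t • w - v)
    have hcompute : f w2 = (t * b) • w - a • v := by
      rw [hw2def, _root_.map_sub, _root_.map_smul, ← hb, ← ha, smul_smul]
    have heq : (c - a) • v + (t * b - c * t) • w = 0 := by
      have h1 : (t * b) • w - a • v = c • (t • w - v) := by
        rw [← hcompute, ← hc, hw2def]
      linear_combination (norm := module) h1
    obtain ⟨h1, h2⟩ := hind _ _ heq
    have hca : c = a := sub_eq_zero.mp h1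
    have hba : b = a := by
      have : t * (b - c) = 0 := by ring_nf; linear_combination h2
      rcases mul_eq_zero.mp this with h | h
      · exact absurd h ht0
      · rw [sub_eq_zero.mp h, hca]
    have ha0 : a ≠ 0 := by
      intro h
      rw [h, zero_smul] at ha
      exact hv0 (hinj n (by rw [← hfdef, ← ha]; simp))
    refine ⟨a, ha0, fun x => ?_⟩
    -- x is a combination of v and w
    have hx : x ∈ Submodule.span ℂ ({v, w} : Set (Fin 2 → ℂ)) := by
      rw [hspan_top]; trivial
    obtain ⟨α, β, hx⟩ := Submodule.mem_span_pair.mp hx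
    rw [← hx, _root_.map_add, _root_.map_smul, _root_.map_smul, ← ha, ← hb, hba]
    module
  -- eigenvector of A gives a G-invariant line
  have : Nontrivial (Fin 2 → ℂ) := inferInstance
  obtain ⟨μ, hμ⟩ := Module.End.exists_eigenvalue (A : Module.End ℂ (Fin 2 → ℂ))
  obtain ⟨u, hu⟩ := hμ.exists_hasEigenvector
  have hu0 : u ≠ 0 := hu.right
  have hAu : A u = μ • u := hu.apply_eq_smul
  have hμ0 : μ ≠ 0 := by
    intro h
    rw [h, zero_smul] at hAu
    exact hu0 (hinj γ (show A u = A 0 by rw [hAu, map_zero]))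
  refine key (ℂ ∙ u) (finrank_span_singleton hu0) ?_ ?_
  · intro n hn
    obtain ⟨a, ha0, ha⟩ := hscalar n hn
    rw [Submodule.map_span, Set.image_singleton, ha u,
      Submodule.span_singleton_smul_eq (Ne.isUnit ha0) u]
  · rw [Submodule.map_span, Set.image_singleton, hAu,
      Submodule.span_singleton_smul_eq (Ne.isUnit hμ0) u]
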